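/- Let p be a prime and a a p-ary nearly perfect sequence of period n ≥ 2 and type γ ∈ ℤ. Then p divides n - γ. -/

import Mathlib

theorem stmt_4 (p : ℕ) (hp : p.Prime) (n : ℕ) [NeZero n] (hn : 2 ≤ n) (γ : ℤ)
    (ζ : ℂ) (hζ : IsPrimitiveRoot ζ p) (b : ZMod n → ℕ) (a : ZMod n → ℂ)
    (ha : ∀ i, a i = ζ ^ b i)
    (hnps : ∀ t : ZMod n, t ≠ 0 →
      ∑ i : ZMod n, a i * (starRingEnd ℂ) (a (i + t)) = γ) :
    (p : ℤ) ∣ (n : ℤ) - γ := by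
  haveI : Fact (1 < n) := ⟨hn⟩
  haveI : Fact p.Prime := ⟨hp⟩
  have hp0 : 0 < p := hp.pos
  have hζp : ζ ^ p = 1 := hζ.pow_eq_one
  have hnorm : ‖ζ‖ = 1 := Complex.norm_eq_one_of_pow_eq_one hζp hp0.ne'
  have hconj : (starRingEnd ℂ) ζ = ζ ^ (p - 1) := by
    have h1 : (starRingEnd ℂ) ζ * ζ = 1 := by
      rw [mul_comm, Complex.mul_conj]
      norm_cast
      rw [Complex.normSq_eq_norm_sq, hnorm]; norm_num
    have h2 : ζ ^ (p - 1) * ζ = 1 := by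
      rw [← pow_succ, Nat.sub_add_cancel hp0, hζp]
    have hζne : ζ ≠ 0 := hζ.ne_zero hp0.ne'
    exact mul_right_cancel₀ hζne (h1.trans h2.symm)
  set c : ZMod n → ℕ := fun i => b i + (p - 1) * b (i + 1) with hc
  have hγ : (γ : ℂ) = ∑ i : ZMod n, ζ ^ (c i) := by
    rw [← hnps 1 one_ne_zero]
    refine Finset.sum_congr rfl fun i _ => ?_
    rw [ha, ha, map_pow, hconj, ← pow_mul, ← pow_add]
  set f : Polynomial ℤ := (∑ i : ZMod n, Polynomial.X ^ (c i)) - Polynomial.C γ with hfdef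
  have hf : Polynomial.aeval ζ f = 0 := by
    simp only [hfdef, map_sub, map_sum, map_pow, Polynomial.aeval_X, Polynomial.aeval_C]
    rw [← hγ]
    simp [sub_eq_zero]
  have hint : IsIntegral ℤ ζ := hζ.isIntegral hp0
  have hdvd : minpoly ℤ ζ ∣ f := minpoly.isIntegrallyClosed_dvd hint hf
  have hcyc : Polynomial.cyclotomic p ℤ = minpoly ℤ ζ := Polynomial.cyclotomic_eq_minpoly hζ hp0
  obtain ⟨g, hg⟩ := hdvd
  have hev1 : f.eval 1 = (p : ℤ) * g.eval 1 := by
    rw [hg, ← hcyc, Polynomial.eval_mul, Polynomial.eval_one_cyclotomic_prime]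
  have hev2 : f.eval 1 = (n : ℤ) - γ := by
    simp [hfdef, Polynomial.eval_finset_sum, ZMod.card]
  exact ⟨g.eval 1, by rw [← hev2, hev1]⟩
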